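/- Let p be a prime with p ≡ 1 (mod 4), f an integer with f² ≡ -1 (mod p), and G = ⟨x,y,z | x^p = y^p = z⁴ = 1, xy = yx, z⁻¹xz = x^f, z⁻¹yz = y^f⟩. Then the subgroup of G generated by all involutions has index 2 in G. -/

import Mathlib

theorem stmt7 (p f : ℕ) (hp : p.Prime) (hp4 : p % 4 = 1)
    (hf : (f : ZMod p) ^ 2 = -1)
    {G : Type*} [Group G] [Fintype G] (x y z : G)
    (hgen : Subgroup.closure ({x, y, z} : Set G) = ⊤)
    (hx : orderOf x = p) (hy : orderOf y = p) (hz : orderOf z = 4)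
    (hxy : x * y = y * x)
    (hzx : z⁻¹ * x * z = x ^ f) (hzy : z⁻¹ * y * z = y ^ f)
    (hcard : Fintype.card G = 4 * p ^ 2) :
    (Subgroup.closure {g : G | orderOf g = 2}).index = 2 := by
  haveI : Fact p.Prime := ⟨hp⟩
  haveI : Fact (Nat.Prime 2) := ⟨Nat.prime_two⟩
  have hp2 : p ≠ 2 := by intro h; rw [h] at hp4; norm_num at hp4
  have hz4 : z ^ 4 = 1 := by rw [← hz]; exact pow_orderOf_eq_one z
  have hxp : x ^ p = 1 := by rw [← hx]; exact pow_orderOf_eq_one x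
  have hyp : y ^ p = 1 := by rw [← hy]; exact pow_orderOf_eq_one y
  have hz2inv : (z ^ 2)⁻¹ = z ^ 2 := by
    rw [inv_eq_iff_mul_eq_one, ← pow_add]; exact hz4
  have hz3 : z ^ 3 = z⁻¹ := by
    rw [eq_inv_iff_mul_eq_one, ← pow_succ]; exact hz4
  -- p ∣ f^2 + 1
  have hpdvd : p ∣ f ^ 2 + 1 := by
    have : ((f ^ 2 + 1 : ℕ) : ZMod p) = 0 := by push_cast [hf]; ring
    exact (ZMod.natCast_eq_zero_iff _ _).mp this
  have hxf2 : x ^ (f ^ 2) = x⁻¹ := by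
    have h1 : x ^ (f ^ 2 + 1) = 1 :=
      orderOf_dvd_iff_pow_eq_one.mp (hx ▸ hpdvd)
    rw [pow_succ] at h1
    rw [eq_inv_iff_mul_eq_one]; exact h1
  -- conjugation formulas
  have conj1 : ∀ g : G, z⁻¹ * g * z = g ^ f → ∀ k : ℕ, z⁻¹ * g ^ k * z = g ^ (k * f) := by
    intro g hg k
    have h0 := conj_pow (i := k) (a := z⁻¹) (b := g)
    rw [inv_inv] at h0
    rw [← h0, hg, ← pow_mul, mul_comm]
  -- z^2 inverts x and y
  have hz2x : z ^ 2 * x * z ^ 2 = x⁻¹ := by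
    have h1 : z⁻¹ * x ^ f * z = x ^ (f * f) := conj1 x hzx f
    have h2 : z⁻¹ * (z⁻¹ * x * z) * z = x ^ (f ^ 2) := by rw [hzx, h1, sq]
    have h3 : (z ^ 2)⁻¹ * x * z ^ 2 = x⁻¹ := by
      rw [← hxf2, ← h2, pow_two, mul_inv_rev]; simp [mul_assoc]
    rwa [hz2inv] at h3
  have hyf2 : y ^ (f ^ 2) = y⁻¹ := by
    have h1 : y ^ (f ^ 2 + 1) = 1 :=
      orderOf_dvd_iff_pow_eq_one.mp (hy ▸ hpdvd)
    rw [pow_succ] at h1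
    rw [eq_inv_iff_mul_eq_one]; exact h1
  have hz2y : z ^ 2 * y * z ^ 2 = y⁻¹ := by
    have h1 : z⁻¹ * y ^ f * z = y ^ (f * f) := conj1 y hzy f
    have h2 : z⁻¹ * (z⁻¹ * y * z) * z = y ^ (f ^ 2) := by rw [hzy, h1, sq]
    have h3 : (z ^ 2)⁻¹ * y * z ^ 2 = y⁻¹ := by
      rw [← hyf2, ← h2, pow_two, mul_inv_rev]; simp [mul_assoc]
    rwa [hz2inv] at h3
  -- involutions
  have hoz2 : orderOf (z ^ 2) = 2 := by
    rw [orderOf_pow, hz]; norm_num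
  have hpdvd2 : ¬ (p ∣ 2) := fun h =>
    hp2 ((Nat.prime_dvd_prime_iff_eq hp Nat.prime_two).mp h)
  have hinv_of : ∀ g : G, orderOf g = p → z ^ 2 * g * z ^ 2 = g⁻¹ →
      orderOf (g * z ^ 2) = 2 := by
    intro g hg hcg
    have hsq : (g * z ^ 2) ^ 2 = 1 := by
      have : g * z ^ 2 * (g * z ^ 2) = g * (z ^ 2 * g * z ^ 2) := by group
      rw [sq, this, hcg, mul_inv_cancel]
    have hne : g * z ^ 2 ≠ 1 := by
      intro h
      have : g = z ^ 2 := by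
        rw [← hz2inv, eq_inv_iff_mul_eq_one]; exact h
      rw [this, hoz2] at hg
      exact hp2 hg.symm
    exact orderOf_eq_prime hsq hne
  have hoxz2 : orderOf (x * z ^ 2) = 2 := hinv_of x hx hz2x
  have hoyz2 : orderOf (y * z ^ 2) = 2 := hinv_of y hy hz2y
  set S : Set G := {g : G | orderOf g = 2} with hS
  set H : Subgroup G := Subgroup.closure S with hHdef
  have hz2H : z ^ 2 ∈ H := Subgroup.subset_closure hoz2
  have hxH : x ∈ H := by
    have h1 : x * z ^ 2 ∈ H := Subgroup.subset_closure hoxz2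
    have : x = (x * z ^ 2) * (z ^ 2)⁻¹ := by group
    rw [this]; exact mul_mem h1 (inv_mem hz2H)
  have hyH : y ∈ H := by
    have h1 : y * z ^ 2 ∈ H := Subgroup.subset_closure hoyz2
    have : y = (y * z ^ 2) * (z ^ 2)⁻¹ := by group
    rw [this]; exact mul_mem h1 (inv_mem hz2H)
  -- H is normal
  haveI hHn : H.Normal := by
    constructor
    intro n hn g
    refine Subgroup.closure_induction (p := fun n _ => g * n * g⁻¹ ∈ H)
      ?_ ?_ ?_ ?_ hn
    · intro a ha
      refine Subgroup.subset_closure ?_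
      have : SemiconjBy g a (g * a * g⁻¹) := by
        unfold SemiconjBy; group
      have := this.orderOf_eq
      rw [hS, Set.mem_setOf_eq] at ha ⊢
      rw [← this]; exact ha
    · simpa using one_mem H
    · intro a b _ _ hga hgb
      have : g * (a * b) * g⁻¹ = (g * a * g⁻¹) * (g * b * g⁻¹) := by group
      rw [this]; exact mul_mem hga hgb
    · intro a _ hga
      have : g * a⁻¹ * g⁻¹ = (g * a * g⁻¹)⁻¹ := by group
      rw [this]; exact inv_mem hga
  -- the subgroup P = closure {x, y}
  set P : Subgroup G := Subgroup.closure {x, y} with hPdef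
  have hxP : x ∈ P := Subgroup.subset_closure (by simp)
  have hyP : y ∈ P := Subgroup.subset_closure (by simp)
  -- P is commutative
  have hPcent : P ≤ Subgroup.centralizer {x, y} := by
    rw [hPdef, Subgroup.closure_le]
    intro a ha
    simp only [Set.mem_insert_iff, Set.mem_singleton_iff] at ha
    refine Subgroup.mem_centralizer_iff.mpr ?_
    intro b hb
    simp only [Set.mem_insert_iff, Set.mem_singleton_iff] at hb
    rcases ha with ha | ha <;> rcases hb with hb | hb <;> subst ha <;> subst hb <;>
      first | rfl | exact hxy | exact hxy.symm
  have hPcomm : ∀ a ∈ P, ∀ b ∈ P, a * b = b * a := by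
    have h2 : P ≤ Subgroup.centralizer (P : Set G) := by
      rw [hPdef, Subgroup.closure_le]
      intro a ha
      simp only [Set.mem_insert_iff, Set.mem_singleton_iff] at ha
      refine Subgroup.mem_centralizer_iff.mpr ?_
      intro b hb
      rcases ha with ha | ha <;> subst ha <;>
        exact (Subgroup.mem_centralizer_iff.mp (hPcent hb) a
          (by simp [Set.mem_insert_iff])).symm
    intro a ha b hb
    exact (Subgroup.mem_centralizer_iff.mp (h2 hb) a ha)
  -- every element of P has g^p = 1
  have hPp : ∀ g ∈ P, g ^ p = 1 := by
    intro g hg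
    refine Subgroup.closure_induction (p := fun g _ => g ^ p = 1) ?_ ?_ ?_ ?_ hg
    · intro a ha
      simp only [Set.mem_insert_iff, Set.mem_singleton_iff] at ha
      rcases ha with ha | ha <;> subst ha
      · exact hxp
      · exact hyp
    · simp
    · intro a b ha hb hap hbp
      have hc : Commute a b := hPcomm a ha b hb
      rw [hc.mul_pow, hap, hbp, one_mul]
    · intro a _ hap
      rw [inv_pow, hap, inv_one]
  -- P is normal
  have hconjz : ∀ g ∈ P, z⁻¹ * g * z ∈ P := by
    intro g hg
    refine Subgroup.closure_induction (p := fun g _ => z⁻¹ * g * z ∈ P) ?_ ?_ ?_ ?_ hg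
    · intro a ha
      simp only [Set.mem_insert_iff, Set.mem_singleton_iff] at ha
      rcases ha with ha | ha <;> subst ha
      · rw [hzx]; exact pow_mem hxP f
      · rw [hzy]; exact pow_mem hyP f
    · simpa using one_mem P
    · intro a b _ _ ha hb
      have : z⁻¹ * (a * b) * z = (z⁻¹ * a * z) * (z⁻¹ * b * z) := by group
      rw [this]; exact mul_mem ha hb
    · intro a _ ha
      have : z⁻¹ * a⁻¹ * z = (z⁻¹ * a * z)⁻¹ := by group
      rw [this]; exact inv_mem ha
  have hz4' : z * (z * (z * z)) = 1 := by
    rw [show (4 : ℕ) = 2 + 2 from rfl, pow_add, pow_two] at hz4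
    simpa only [mul_assoc] using hz4
  have hzzz : z * (z * z) = z⁻¹ := by
    rw [eq_inv_iff_mul_eq_one]
    calc z * (z * z) * z = z * (z * (z * z)) := by simp only [mul_assoc]
      _ = 1 := hz4'
  have hzzz' : z⁻¹ * (z⁻¹ * z⁻¹) = z := by
    have h := congrArg (·⁻¹) hzzz
    simpa [mul_inv_rev, mul_assoc] using h
  have key3 : ∀ w : G, z⁻¹ * (z⁻¹ * (z⁻¹ * w)) = z * w := by
    intro w
    rw [← mul_assoc, ← mul_assoc,
      show z⁻¹ * z⁻¹ * z⁻¹ = z from by rw [mul_assoc]; exact hzzz']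
  have hconjz' : ∀ g ∈ P, z * g * z⁻¹ ∈ P := by
    intro g hg
    have h3 := hconjz _ (hconjz _ (hconjz g hg))
    have E : z⁻¹ * (z⁻¹ * (z⁻¹ * g * z) * z) * z = z * g * z⁻¹ := by
      simp only [mul_assoc]
      rw [hzzz, key3]
    rwa [E] at h3
  have hzN : z ∈ Subgroup.normalizer (P : Set G) := by
    refine Subgroup.mem_normalizer_iff.mpr fun h => ⟨fun hh => hconjz' h hh, fun hh => ?_⟩
    have h1 := hconjz _ hh
    have e : z⁻¹ * (z * h * z⁻¹) * z = h := by group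
    rwa [e] at h1
  haveI hPn : P.Normal := by
    rw [← Subgroup.normalizer_eq_top_iff]
    rw [eq_top_iff, ← hgen, Subgroup.closure_le]
    intro a ha
    simp only [Set.mem_insert_iff, Set.mem_singleton_iff] at ha
    rcases ha with ha | ha | ha <;> subst ha
    · exact Subgroup.le_normalizer hxP
    · exact Subgroup.le_normalizer hyP
    · exact hzN
  -- endgame
  have hpodd : ¬ (2 ∣ p) := by omega
  have hz2P : z ^ 2 ∉ P := by
    intro h
    have h1 : (z ^ 2) ^ p = 1 := hPp _ h
    have h2 := orderOf_dvd_of_pow_eq_one h1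
    rw [hoz2] at h2
    exact hpodd h2
  -- zpowers of the image of z is everything, for any normal subgroup containing x and y
  have htopgen : ∀ (N : Subgroup G) (hN : N.Normal), x ∈ N → y ∈ N →
      Subgroup.zpowers ((QuotientGroup.mk' N) z) = ⊤ := by
    intro N hN hxN hyN
    have h1 : (⊤ : Subgroup (G ⧸ N)) =
        Subgroup.closure ((QuotientGroup.mk' N) '' {x, y, z}) := by
      rw [← MonoidHom.map_closure, hgen]
      exact (Subgroup.map_top_of_surjective _ (QuotientGroup.mk'_surjective N)).symm
    have h2 : Subgroup.closure ((QuotientGroup.mk' N) '' {x, y, z}) ≤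
        Subgroup.zpowers ((QuotientGroup.mk' N) z) := by
      rw [Subgroup.closure_le]
      rintro q ⟨a, ha, rfl⟩
      simp only [Set.mem_insert_iff, Set.mem_singleton_iff] at ha
      rcases ha with ha | ha | ha <;> rw [ha]
      · have : (QuotientGroup.mk' N) x = 1 := (QuotientGroup.eq_one_iff x).mpr hxN
        rw [SetLike.mem_coe, this]; exact one_mem _
      · have : (QuotientGroup.mk' N) y = 1 := (QuotientGroup.eq_one_iff y).mpr hyN
        rw [SetLike.mem_coe, this]; exact one_mem _
      · exact Subgroup.mem_zpowers _
    rw [eq_top_iff]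
    exact le_trans (le_of_eq h1) h2
  have htop2 := htopgen P hPn hxP hyP
  -- order of the image of z in G ⧸ P is 4
  have hdvd4 : orderOf ((QuotientGroup.mk' P) z) ∣ 4 := by
    apply orderOf_dvd_of_pow_eq_one
    rw [← map_pow, hz4, map_one]
  have hne2 : ((QuotientGroup.mk' P) z) ^ 2 ≠ 1 := by
    rw [← map_pow]
    intro h
    exact hz2P ((QuotientGroup.eq_one_iff _).mp h)
  have h4 : orderOf ((QuotientGroup.mk' P) z) = 4 := by
    obtain ⟨m, hm2, hmeq⟩ := (Nat.dvd_prime_pow Nat.prime_two).mp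
      (show orderOf ((QuotientGroup.mk' P) z) ∣ 2 ^ 2 by simpa using hdvd4)
    interval_cases m
    · exact absurd (orderOf_dvd_iff_pow_eq_one.mp (by rw [hmeq]; norm_num)) hne2
    · exact absurd (orderOf_dvd_iff_pow_eq_one.mp (by rw [hmeq]; norm_num)) hne2
    · rw [hmeq]; norm_num
  -- image of any involution lies in zpowers of (image z)^2
  have hinvmap : ∀ g : G, orderOf g = 2 →
      (QuotientGroup.mk' P) g ∈ Subgroup.zpowers (((QuotientGroup.mk' P) z) ^ 2) := by
    intro g hg
    have hmem : (QuotientGroup.mk' P) g ∈ Subgroup.zpowers ((QuotientGroup.mk' P) z) := by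
      rw [htop2]; exact Subgroup.mem_top _
    obtain ⟨k, hk⟩ := Subgroup.mem_zpowers_iff.mp hmem
    have hg2 : ((QuotientGroup.mk' P) g) ^ (2 : ℕ) = 1 := by
      rw [← map_pow, show g ^ (2 : ℕ) = 1 from hg ▸ pow_orderOf_eq_one g, map_one]
    have hk2 : ((QuotientGroup.mk' P) z) ^ (k * 2) = 1 := by
      rw [zpow_mul, hk, show (2 : ℤ) = ((2 : ℕ) : ℤ) from rfl, zpow_natCast]
      exact hg2
    have hdd : (4 : ℤ) ∣ k * 2 := by
      have := orderOf_dvd_iff_zpow_eq_one.mpr hk2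
      rwa [h4] at this
    obtain ⟨m, hm⟩ : ∃ m : ℤ, k = 2 * m := ⟨k / 2, by omega⟩
    refine Subgroup.mem_zpowers_iff.mpr ⟨m, ?_⟩
    rw [← hk, hm, ← zpow_natCast ((QuotientGroup.mk' P) z) 2, ← zpow_mul]
    norm_num
  have hzH : z ∉ H := by
    intro hzmem
    have hHle : H ≤ Subgroup.comap (QuotientGroup.mk' P)
        (Subgroup.zpowers (((QuotientGroup.mk' P) z) ^ 2)) := by
      rw [hHdef, Subgroup.closure_le]
      intro g hg
      exact hinvmap g hg
    obtain ⟨m, hm⟩ := Subgroup.mem_zpowers_iff.mp (hHle hzmem)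
    have h1 : ((QuotientGroup.mk' P) z) ^ (2 * m - 1) = 1 := by
      rw [zpow_sub, zpow_mul, show ((QuotientGroup.mk' P) z) ^ (2 : ℤ) =
        ((QuotientGroup.mk' P) z) ^ (2 : ℕ) from by rw [← zpow_natCast]; norm_num, hm,
        zpow_one, mul_inv_cancel]
    have h2 : (4 : ℤ) ∣ 2 * m - 1 := by
      have := orderOf_dvd_iff_zpow_eq_one.mpr h1
      rwa [h4] at this
    omega
  -- final index computation
  have hπz2 : ((QuotientGroup.mk' H) z) ^ 2 = 1 := by
    rw [← map_pow]
    exact (QuotientGroup.eq_one_iff _).mpr hz2H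
  have hπzne : (QuotientGroup.mk' H) z ≠ 1 := fun h =>
    hzH ((QuotientGroup.eq_one_iff _).mp h)
  have hoπz : orderOf ((QuotientGroup.mk' H) z) = 2 := orderOf_eq_prime hπz2 hπzne
  have htopH := htopgen H hHn hxH hyH
  have hcardQ := Nat.card_zpowers ((QuotientGroup.mk' H) z)
  rw [htopH, hoπz] at hcardQ
  rw [Subgroup.index_eq_card, ← hcardQ]
  exact (Nat.card_congr Subgroup.topEquiv.toEquiv).symm
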